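/- arXiv:2007.02293 — 3 statements merged into one kernel-verified Lean document; each statement's English description precedes it below -/
import Mathlib

section
/- For every n ≥ 1 and k with 1 ≤ k ≤ n, the unsigned Stirling number of the first kind satisfies c(n,k) = (n!/k!) · Σ 1/(m_1 ⋯ m_k), where the sum is over all tuples (m_1,…,m_k) of positive integers with m_1+⋯+m_k = n. -/
/-- The unsigned Stirling numbers of the first kind. -/
def stirling1 : ℕ → ℕ → ℕ
  | 0, 0 => 1
  | 0, _ + 1 => 0
  | _ + 1, 0 => 0
  | n + 1, k + 1 => n * stirling1 n (k + 1) + stirling1 n k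

open Finset


/-- Compositions of `n` into `k` positive parts. -/
def Comp (n k : ℕ) : Finset (Fin k → ℕ) :=
  (Finset.Nat.antidiagonalTuple k n).filter fun m => ∀ i, 0 < m i

lemma mem_Comp {n k : ℕ} {m : Fin k → ℕ} :
    m ∈ Comp n k ↔ (∑ i, m i = n) ∧ ∀ i, 0 < m i := by
  simp [Comp, Finset.Nat.mem_antidiagonalTuple]

noncomputable def T (n k : ℕ) : ℚ := ∑ m ∈ Comp n k, ∏ i, ((m i : ℚ))⁻¹

lemma T_zero_zero : T 0 0 = 1 := by
  have : Comp 0 0 = {![]} := by decide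
  simp [T, this]

lemma T_zero_succ (k : ℕ) : T 0 (k+1) = 0 := by
  have : Comp 0 (k+1) = ∅ := by
    ext m
    simp only [mem_Comp, Finset.notMem_empty, iff_false, not_and]
    intro hs hp
    have := hp 0
    have h0 : m 0 ≤ ∑ i, m i := Finset.single_le_sum (fun i _ => Nat.zero_le _) (mem_univ 0)
    omega
  simp [T, this]

lemma T_succ_zero (n : ℕ) : T (n+1) 0 = 0 := by
  have : Comp (n+1) 0 = ∅ := by
    ext m
    simp [mem_Comp]
  simp [T, this]

lemma erase_eq_image_succAbove {k : ℕ} (i : Fin (k+1)) :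
    (univ : Finset (Fin (k+1))).erase i = univ.image i.succAbove := by
  ext j
  simp only [mem_erase, mem_univ, and_true, mem_image, true_and]
  constructor
  · intro h
    exact Fin.exists_succAbove_eq h
  · rintro ⟨x, rfl⟩
    exact Fin.succAbove_ne i x

lemma prod_erase_eq {k : ℕ} (i : Fin (k+1)) (f : Fin (k+1) → ℚ) :
    ∏ j ∈ univ.erase i, f j = ∏ j, f (i.succAbove j) := by
  rw [erase_eq_image_succAbove, prod_image (fun a _ b _ h => Fin.succAbove_right_injective h)]

lemma key (n k : ℕ) :
    ((n:ℚ)+1) * T (n+1) (k+1) = n * T n (k+1) + ((k:ℚ)+1) * T n k := by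
  classical
  have step1 : ((n:ℚ)+1) * T (n+1) (k+1)
      = ∑ m ∈ Comp (n+1) (k+1), ∑ i, ∏ j ∈ univ.erase i, ((m j : ℚ))⁻¹ := by
    rw [T, Finset.mul_sum]
    refine Finset.sum_congr rfl fun m hm => ?_
    obtain ⟨hs, hp⟩ := mem_Comp.mp hm
    have hcast : ((n:ℚ)+1) = ∑ i, (m i : ℚ) := by
      rw [← Nat.cast_sum, hs]; push_cast; ring
    rw [hcast, Finset.sum_mul]
    refine Finset.sum_congr rfl fun i _ => ?_
    rw [← Finset.mul_prod_erase univ (fun j => ((m j : ℚ))⁻¹) (mem_univ i), ← mul_assoc,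
      mul_inv_cancel₀ (by exact_mod_cast (hp i).ne'), one_mul]
  rw [step1, Finset.sum_comm]
  have split : ∀ i : Fin (k+1),
      ∑ m ∈ Comp (n+1) (k+1), ∏ j ∈ univ.erase i, ((m j : ℚ))⁻¹
        = T n k + ∑ m ∈ Comp n (k+1), ∏ j ∈ univ.erase i, ((m j : ℚ))⁻¹ := by
    intro i
    rw [← Finset.sum_filter_add_sum_filter_not (Comp (n+1) (k+1)) (fun m => m i = 1)]
    congr 1
    · -- m i = 1 part : bijection with Comp n k via removing coordinate i
      rw [T]
      refine Finset.sum_nbij' (fun m => m ∘ i.succAbove) (fun m => i.insertNth 1 m)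
        ?_ ?_ ?_ ?_ ?_
      · intro m hm
        simp only [mem_filter] at hm
        obtain ⟨hm, hmi⟩ := hm
        obtain ⟨hs, hp⟩ := mem_Comp.mp hm
        refine mem_Comp.mpr ⟨?_, fun j => hp _⟩
        have h := Fin.sum_univ_succAbove m i
        rw [hmi, hs] at h
        simp only [Function.comp_apply]
        omega
      · intro m hm
        obtain ⟨hs, hp⟩ := mem_Comp.mp hm
        refine Finset.mem_filter.mpr ⟨mem_Comp.mpr ⟨?_, ?_⟩, by simp⟩
        · rw [Fin.sum_univ_succAbove _ i, Fin.insertNth_apply_same]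
          simp only [Fin.insertNth_apply_succAbove]
          omega
        · intro j
          rcases eq_or_ne j i with rfl | h
          · simp [Fin.insertNth_apply_same]
          · obtain ⟨z, rfl⟩ := Fin.exists_succAbove_eq h
            rw [Fin.insertNth_apply_succAbove]
            exact hp z
      · intro m hm
        simp only [mem_filter] at hm
        funext j
        rcases eq_or_ne j i with rfl | h
        · rw [Fin.insertNth_apply_same, hm.2]
        · obtain ⟨z, rfl⟩ := Fin.exists_succAbove_eq h
          rw [Fin.insertNth_apply_succAbove, Function.comp_apply]
      · intro m hm
        funext j
        rw [Function.comp_apply, Fin.insertNth_apply_succAbove]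
      · intro m hm
        rw [prod_erase_eq]
        exact Finset.prod_congr rfl fun j _ => by rw [Function.comp_apply]
    · -- m i ≥ 2 part : bijection with Comp n (k+1) via decrement at i
      refine Finset.sum_nbij' (fun m => Function.update m i (m i - 1))
        (fun m => Function.update m i (m i + 1)) ?_ ?_ ?_ ?_ ?_
      · intro m hm
        simp only [mem_filter] at hm
        obtain ⟨hm, hmi⟩ := hm
        obtain ⟨hs, hp⟩ := mem_Comp.mp hm
        have h2 : 2 ≤ m i := by have := hp i; omega
        have hsum : m i + ∑ j ∈ univ.erase i, m j = n + 1 := by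
          rw [Finset.add_sum_erase univ m (mem_univ i)]; exact hs
        refine mem_Comp.mpr ⟨?_, fun j => ?_⟩
        · have hupd : ∑ j, Function.update m i (m i - 1) j
              = (m i - 1) + ∑ j ∈ univ.erase i, m j := by
            rw [← Finset.add_sum_erase univ _ (mem_univ i), Function.update_self]
            congr 1
            exact Finset.sum_congr rfl fun j hj =>
              Function.update_of_ne (Finset.mem_erase.mp hj).1 _ _
          rw [hupd]
          omega
        · rcases eq_or_ne j i with rfl | h
          · rw [Function.update_self]; omega
          · rw [Function.update_of_ne h]; exact hp j
      · intro m hm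
        obtain ⟨hs, hp⟩ := mem_Comp.mp hm
        have hsum : m i + ∑ j ∈ univ.erase i, m j = n := by
          rw [Finset.add_sum_erase univ m (mem_univ i)]; exact hs
        refine Finset.mem_filter.mpr ⟨mem_Comp.mpr ⟨?_, fun j => ?_⟩, ?_⟩
        · have hupd : ∑ j, Function.update m i (m i + 1) j
              = (m i + 1) + ∑ j ∈ univ.erase i, m j := by
            rw [← Finset.add_sum_erase univ _ (mem_univ i), Function.update_self]
            congr 1
            exact Finset.sum_congr rfl fun j hj =>
              Function.update_of_ne (Finset.mem_erase.mp hj).1 _ _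
          rw [hupd]
          omega
        · rcases eq_or_ne j i with rfl | h
          · rw [Function.update_self]; omega
          · rw [Function.update_of_ne h]; exact hp j
        · rw [Function.update_self]
          have := hp i; omega
      · intro m hm
        simp only [mem_filter] at hm
        obtain ⟨hm, hmi⟩ := hm
        obtain ⟨hs, hp⟩ := mem_Comp.mp hm
        have h2 : 2 ≤ m i := by have := hp i; omega
        funext j
        rcases eq_or_ne j i with rfl | h
        · rw [Function.update_self, Function.update_self]; omega
        · rw [Function.update_of_ne h, Function.update_of_ne h]
      · intro m hm
        funext j
        rcases eq_or_ne j i with rfl | h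
        · rw [Function.update_self, Function.update_self]; omega
        · rw [Function.update_of_ne h, Function.update_of_ne h]
      · intro m hm
        refine Finset.prod_congr rfl fun j hj => ?_
        rw [Function.update_of_ne (Finset.mem_erase.mp hj).1]
  rw [Finset.sum_congr rfl fun i _ => split i, Finset.sum_add_distrib]
  rw [add_comm]
  congr 1
  · -- second part sums to n * T n (k+1)
    rw [Finset.sum_comm, T, Finset.mul_sum]
    refine Finset.sum_congr rfl fun m hm => ?_
    obtain ⟨hs, hp⟩ := mem_Comp.mp hm
    have hterm : ∀ i : Fin (k+1), ∏ j ∈ univ.erase i, ((m j : ℚ))⁻¹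
        = (m i : ℚ) * ∏ j, ((m j : ℚ))⁻¹ := by
      intro i
      rw [← Finset.mul_prod_erase univ (fun j => ((m j : ℚ))⁻¹) (mem_univ i), ← mul_assoc,
        mul_inv_cancel₀ (by exact_mod_cast (hp i).ne'), one_mul]
    rw [Finset.sum_congr rfl fun i _ => hterm i, ← Finset.sum_mul]
    congr 1
    rw [← Nat.cast_sum, hs]
  · rw [Finset.sum_const, card_univ, Fintype.card_fin, nsmul_eq_mul]
    push_cast
    ring

lemma main_eq : ∀ n k : ℕ, ((k.factorial : ℚ)) * (stirling1 n k : ℚ) = (n.factorial : ℚ) * T n k := by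
  intro n
  induction n with
  | zero =>
    intro k
    cases k with
    | zero => simp [stirling1, T_zero_zero]
    | succ k => simp [stirling1, T_zero_succ]
  | succ n ih =>
    intro k
    cases k with
    | zero => simp [stirling1, T_succ_zero]
    | succ k =>
      have h1 := ih (k+1)
      have h2 := ih k
      have hkey := key n k
      have hst : (stirling1 (n+1) (k+1) : ℚ) = n * stirling1 n (k+1) + stirling1 n k := by
        show ((n * stirling1 n (k + 1) + stirling1 n k : ℕ) : ℚ) = _
        push_cast; ring
      rw [hst]
      have hfact : ((k+1).factorial : ℚ) = ((k:ℚ)+1) * k.factorial := by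
        rw [Nat.factorial_succ]; push_cast; ring
      have hfact' : ((n+1).factorial : ℚ) = ((n:ℚ)+1) * n.factorial := by
        rw [Nat.factorial_succ]; push_cast; ring
      rw [hfact, hfact']
      nlinarith [h1, h2, hkey]

theorem stirling1_eq_sum_over_compositions (n k : ℕ) (hn : 1 ≤ n) (hk : 1 ≤ k)
    (hkn : k ≤ n) :
    (stirling1 n k : ℚ) =
      (n.factorial : ℚ) / (k.factorial : ℚ) *
        ∑ m ∈ (Finset.Nat.antidiagonalTuple k n).filter fun m => ∀ i, 0 < m i,
          ∏ i, ((m i : ℚ))⁻¹ := by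
  have h := main_eq n k
  have hset : ((Finset.Nat.antidiagonalTuple k n).filter fun m => ∀ i, 0 < m i) = Comp n k := rfl
  rw [hset]
  show (stirling1 n k : ℚ) = (n.factorial : ℚ) / (k.factorial : ℚ) * T n k
  have hkf : ((k.factorial : ℚ)) ≠ 0 := by positivity
  field_simp
  linarith [h]
end

section
/- For r = 1/2 the analytically continued r-Stirling numbers relate to the B-analogues of Stirling numbers by: 2^{n−k} · c_{1/2}(n+1/2, k+1/2) = B(n,k) and 2^{n−k} · S_{1/2}(n+1/2, k+1/2) = S_B(n,k), where the half-integer r-Stirling numbers are defined by c_r(n+r,k+r) = Σ_{m=0}^{n−k} binom(n,m) c(n−m,k) r^{(m)} and S_r(n+r,k+r) = Σ_{m=k}^{n} binom(n,m) S(m,k) r^{n−m} with r = 1/2 (as rational numbers). -/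
/-- The Stirling numbers of the second kind. -/
def stirling2 : ℕ → ℕ → ℕ
  | 0, 0 => 1
  | 0, _ + 1 => 0
  | _ + 1, 0 => 0
  | n + 1, k + 1 => (k + 1) * stirling2 n (k + 1) + stirling2 n k

/-- The `B`-analogues of the Stirling numbers of the first kind, defined via the
recursion corresponding to `(t+1)(t+3)⋯(t+2n-1) = ∑ₖ B(n,k) tᵏ`. -/
def stirlingB1 : ℕ → ℕ → ℕ
  | 0, 0 => 1
  | 0, _ + 1 => 0
  | n + 1, 0 => (2 * n + 1) * stirlingB1 n 0
  | n + 1, k + 1 => (2 * n + 1) * stirlingB1 n (k + 1) + stirlingB1 n k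

/-- The `B`-analogue of the Stirling numbers of the second kind:
`S_B(n,k) = Σ_{m=k}^{n} 2^{m−k} · binom(n,m) · S(m,k)`. -/
def stirlingB2 (n k : ℕ) : ℕ :=
  ∑ m ∈ Finset.Icc k n, 2 ^ (m - k) * n.choose m * stirling2 m k

/-- The analytically continued `r`-Stirling number of the first kind with `r = 1/2`:
`c_{1/2}(n+1/2, k+1/2) = Σ_{m=0}^{n−k} binom(n,m) c(n−m,k) (1/2)^{(m)}`,
where `(1/2)^{(m)}` is the rising factorial. -/
def halfStirling1 (n k : ℕ) : ℚ :=
  ∑ m ∈ Finset.range (n - k + 1),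
    (n.choose m : ℚ) * (stirling1 (n - m) k : ℚ) * ∏ i ∈ Finset.range m, ((1 : ℚ) / 2 + i)

/-- The analytically continued `r`-Stirling number of the second kind with `r = 1/2`:
`S_{1/2}(n+1/2, k+1/2) = Σ_{m=k}^{n} binom(n,m) S(m,k) (1/2)^{n−m}`. -/
def halfStirling2 (n k : ℕ) : ℚ :=
  ∑ m ∈ Finset.Icc k n, (n.choose m : ℚ) * (stirling2 m k : ℚ) * ((1 : ℚ) / 2) ^ (n - m)

/-! ### Auxiliary lemmas -/

lemma stirling1_eq_zero : ∀ {n k : ℕ}, n < k → stirling1 n k = 0 := by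
  intro n
  induction n with
  | zero => intro k h; match k, h with | k+1, _ => rfl
  | succ n ih =>
    intro k h
    match k, h with
    | k+1, h =>
      show n * stirling1 n (k+1) + stirling1 n k = 0
      rw [ih (by omega), ih (by omega)]; ring

lemma stirling1_self : ∀ n : ℕ, stirling1 n n = 1 := by
  intro n
  induction n with
  | zero => rfl
  | succ n ih =>
    show n * stirling1 n (n+1) + stirling1 n n = 1
    rw [stirling1_eq_zero (by omega), ih]; ring

lemma stirlingB1_eq_zero : ∀ {n k : ℕ}, n < k → stirlingB1 n k = 0 := by
  intro n
  induction n with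
  | zero => intro k h; match k, h with | k+1, _ => rfl
  | succ n ih =>
    intro k h
    match k, h with
    | k+1, h =>
      show (2*n+1) * stirlingB1 n (k+1) + stirlingB1 n k = 0
      rw [ih (by omega), ih (by omega)]; ring

lemma halfStirling1_eq_zero : ∀ {n k : ℕ}, n < k → halfStirling1 n k = 0 := by
  intro n k h
  unfold halfStirling1
  refine Finset.sum_eq_zero fun m hm => ?_
  rw [stirling1_eq_zero (show n - m < k by omega)]
  push_cast; ring

/-- Rising factorial of `1/2`. -/
def Rf (m : ℕ) : ℚ := ∏ i ∈ Finset.range m, ((1 : ℚ) / 2 + i)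

lemma halfStirling1_def' (n k : ℕ) :
    halfStirling1 n k = ∑ m ∈ Finset.range (n - k + 1),
      (n.choose m : ℚ) * (stirling1 (n - m) k : ℚ) * Rf m := rfl

lemma Rf_succ (m : ℕ) : Rf (m + 1) = Rf m * ((1:ℚ)/2 + m) := Finset.prod_range_succ _ _

lemma halfStirling1_zero (n : ℕ) : halfStirling1 n 0 = Rf n := by
  rw [halfStirling1_def', Nat.sub_zero, Finset.sum_range_succ]
  have h0 : ∀ m ∈ Finset.range n,
      (n.choose m : ℚ) * (stirling1 (n - m) 0 : ℚ) * Rf m = 0 := by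
    intro m hm
    have : n - m = (n - m - 1) + 1 := by
      have := Finset.mem_range.mp hm; omega
    rw [this]
    show (n.choose m : ℚ) * ((0:ℕ) : ℚ) * _ = 0
    push_cast; ring
  rw [Finset.sum_eq_zero h0, Nat.choose_self, Nat.sub_self, stirling1_self]
  push_cast; ring

lemma step1 (n k : ℕ) :
    halfStirling1 (n+1) (k+1)
      = ∑ m ∈ Finset.range (n-k+1), ((n.choose m : ℚ) * (stirling1 (n+1-m) (k+1)) * Rf m)
        + ∑ j ∈ Finset.range (n-k), ((n.choose j : ℚ) * (stirling1 (n-j) (k+1)) * Rf (j+1)) := by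
  rw [halfStirling1_def']
  have hd : (n+1) - (k+1) = n - k := by omega
  rw [hd, Finset.sum_range_succ', Finset.sum_range_succ' (n := n - k)
    (f := fun m => (n.choose m : ℚ) * (stirling1 (n+1-m) (k+1)) * Rf m)]
  have hterm : ∀ j ∈ Finset.range (n - k),
      ((n+1).choose (j+1) : ℚ) * (stirling1 (n+1-(j+1)) (k+1)) * Rf (j+1)
        = (n.choose (j+1) : ℚ) * (stirling1 (n+1-(j+1)) (k+1)) * Rf (j+1)
          + (n.choose j : ℚ) * (stirling1 (n-j) (k+1)) * Rf (j+1) := by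
    intro j hj
    have : n + 1 - (j+1) = n - j := by omega
    rw [this, Nat.choose_succ_succ]
    push_cast; ring
  rw [Finset.sum_congr rfl hterm, Finset.sum_add_distrib]
  simp [Nat.choose_zero_right]
  ring

lemma sumL (n k : ℕ) (hk : k ≤ n) :
    ∑ m ∈ Finset.range (n-k+1), ((n.choose m : ℚ) * (stirling1 (n-m) (k+1)) * Rf m)
      = halfStirling1 n (k+1) := by
  rcases eq_or_lt_of_le hk with h | hlt
  · subst h
    rw [halfStirling1_eq_zero (Nat.lt_succ_self k), Nat.sub_self]
    simp [stirling1_eq_zero (Nat.lt_succ_self k)]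
  · rw [halfStirling1_def']
    have h1 : n - (k+1) + 1 = n - k := by omega
    have h2 : n - k + 1 = (n - k) + 1 := rfl
    rw [h1, h2, Finset.sum_range_succ]
    have h3 : n - (n - k) = k := by omega
    rw [h3, stirling1_eq_zero (Nat.lt_succ_self k)]
    push_cast; ring

lemma h1_rec (n k : ℕ) (hk : k ≤ n) :
    halfStirling1 (n+1) (k+1) =
      ((n : ℚ) + 1/2) * halfStirling1 n (k+1) + halfStirling1 n k := by
  rw [step1]
  have e1 : ∑ m ∈ Finset.range (n-k+1), ((n.choose m : ℚ) * (stirling1 (n+1-m) (k+1)) * Rf m)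
      = ∑ m ∈ Finset.range (n-k+1),
          ((n.choose m : ℚ) * ((n - m : ℕ) * (stirling1 (n-m) (k+1)) + (stirling1 (n-m) k : ℚ)) * Rf m) := by
    refine Finset.sum_congr rfl fun m hm => ?_
    have hm' : m ≤ n - k := by have := Finset.mem_range.mp hm; omega
    have : n + 1 - m = (n - m) + 1 := by omega
    rw [this]
    show (n.choose m : ℚ) * ((((n-m) * stirling1 (n-m) (k+1) + stirling1 (n-m) k : ℕ)) : ℚ) * Rf m = _
    push_cast; ring
  rw [e1]
  have e2 : ∑ j ∈ Finset.range (n-k), ((n.choose j : ℚ) * (stirling1 (n-j) (k+1)) * Rf (j+1))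
      = ∑ j ∈ Finset.range (n-k+1), ((n.choose j : ℚ) * (stirling1 (n-j) (k+1)) * Rf j * ((1:ℚ)/2 + j)) := by
    rw [Finset.sum_range_succ]
    have h3 : n - (n - k) = k := by omega
    rw [h3, stirling1_eq_zero (Nat.lt_succ_self k)]
    push_cast
    simp only [mul_zero, zero_mul, add_zero]
    exact Finset.sum_congr rfl fun j _ => by rw [Rf_succ]; ring
  rw [e2]
  rw [← sumL n k hk, halfStirling1_def', Finset.mul_sum, ← Finset.sum_add_distrib,
    ← Finset.sum_add_distrib]
  refine Finset.sum_congr rfl fun m hm => ?_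
  have hm' : m ≤ n - k := by have := Finset.mem_range.mp hm; omega
  have hc : ((n - m : ℕ) : ℚ) = (n : ℚ) - m := by
    have : m ≤ n := by omega
    push_cast [this]; ring
  rw [hc]; ring

lemma part1 : ∀ n k : ℕ, (2 : ℚ) ^ (n - k) * halfStirling1 n k = (stirlingB1 n k : ℚ) := by
  intro n
  induction n with
  | zero =>
    intro k
    match k with
    | 0 => simp [halfStirling1_def', Rf, stirling1, stirlingB1]
    | k+1 =>
      rw [halfStirling1_eq_zero (Nat.succ_pos k), stirlingB1_eq_zero (Nat.succ_pos k)]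
      simp
  | succ n ih =>
    intro k
    match k with
    | 0 =>
      have : halfStirling1 (n+1) 0 = ((n : ℚ) + 1/2) * halfStirling1 n 0 := by
        rw [halfStirling1_zero, halfStirling1_zero, Rf_succ]; ring
      rw [Nat.sub_zero, this]
      have h2 : stirlingB1 (n+1) 0 = (2*n+1) * stirlingB1 n 0 := rfl
      rw [h2]
      have := ih 0
      rw [Nat.sub_zero] at this
      push_cast
      rw [pow_succ]
      calc (2:ℚ)^n * 2 * (((n:ℚ) + 1/2) * halfStirling1 n 0)
          = (2*(n:ℚ)+1) * ((2:ℚ)^n * halfStirling1 n 0) := by ring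
        _ = (2*(n:ℚ)+1) * (stirlingB1 n 0 : ℚ) := by rw [this]
    | k+1 =>
      rcases le_or_gt (k+1) (n+1) with hle | hlt
      · have hk : k ≤ n := by omega
        have hB : stirlingB1 (n+1) (k+1) = (2*n+1) * stirlingB1 n (k+1) + stirlingB1 n k := rfl
        rw [h1_rec n k hk, hB]
        have hd : (n+1) - (k+1) = n - k := by omega
        rw [hd]
        have i1 := ih (k+1)
        have i2 := ih k
        push_cast
        rcases eq_or_lt_of_le hk with h | hlt'
        · subst h
          rw [halfStirling1_eq_zero (Nat.lt_succ_self k)] at i1 ⊢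
          rw [stirlingB1_eq_zero (Nat.lt_succ_self k)]
          rw [Nat.sub_self] at i2 ⊢
          push_cast
          rw [mul_add, mul_zero, i2]
          ring
        · have hsub : n - k = (n - (k+1)) + 1 := by omega
          rw [mul_add, ← i2]
          have : (2:ℚ) ^ (n-k) * (((n:ℚ) + 1/2) * halfStirling1 n (k+1))
              = (2*(n:ℚ)+1) * ((2:ℚ) ^ (n - (k+1)) * halfStirling1 n (k+1)) := by
            rw [hsub, pow_succ]; ring
          rw [this]
          rw [i1]
      · rw [halfStirling1_eq_zero hlt, stirlingB1_eq_zero hlt]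
        simp

theorem halfStirling_eq_stirlingB (n k : ℕ) :
    (2 : ℚ) ^ (n - k) * halfStirling1 n k = (stirlingB1 n k : ℚ) ∧
    (2 : ℚ) ^ (n - k) * halfStirling2 n k = (stirlingB2 n k : ℚ) := by
  refine ⟨part1 n k, ?_⟩
  unfold halfStirling2 stirlingB2
  rw [Finset.mul_sum]
  push_cast
  refine Finset.sum_congr rfl fun m hm => ?_
  obtain ⟨h1, h2⟩ := Finset.mem_Icc.mp hm
  have : n - k = (m - k) + (n - m) := by omega
  rw [this, pow_add]
  have h3 : ((1:ℚ)/2) ^ (n - m) = ((2:ℚ) ^ (n-m))⁻¹ := by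
    rw [div_pow, one_pow, one_div]
  rw [h3]
  field_simp
end

section
/- For d ≥ 1 and every m in {0,…,d}, let N = (N_1,…,N_d) be a standard Gaussian vector in ℝ^d. Then the convex cone W = {x ∈ ℝ^d : x_1 ≤ 0, x_1+x_2 ≤ 0, …, x_1+⋯+x_d ≤ 0} satisfies P(N ∈ W) = binom(2d, d) / 4^d. -/
open MeasureTheory ProbabilityTheory Finset

namespace SparreAndersenAux

/-- The iid standard Gaussian measure on `ℝ^n`. -/
noncomputable def gm (n : ℕ) : Measure (Fin n → ℝ) := Measure.pi fun _ => gaussianReal 0 1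

instance (n : ℕ) : IsProbabilityMeasure (gm n) := by unfold gm; infer_instance

/-- Partial sum of the first `k` coordinates. -/
def psum (n : ℕ) (x : Fin n → ℝ) (k : ℕ) : ℝ :=
  ∑ i ∈ univ.filter (fun i : Fin n => (i : ℕ) < k), x i

lemma measurable_psum (n k : ℕ) : Measurable (fun x => psum n x k) :=
  Finset.measurable_sum _ fun i _ => measurable_pi_apply i

/-- The open cone where all partial sums are negative. -/
def sset (n : ℕ) : Set (Fin n → ℝ) := {x | ∀ k, 1 ≤ k → k ≤ n → psum n x k < 0}

/-- The closed cone where all partial sums are nonpositive. -/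
def cset (n : ℕ) : Set (Fin n → ℝ) := {x | ∀ k, 1 ≤ k → k ≤ n → psum n x k ≤ 0}

/-- The condition on the left block in the argmax decomposition. -/
def aset (j : ℕ) : Set (Fin j → ℝ) := {y | ∀ k, k < j → psum j y k < psum j y j}

/-- The event that the (strict) argmax of the partial-sum walk is at time `j`. -/
def ev (n j : ℕ) : Set (Fin n → ℝ) :=
  {x | (∀ k, k < j → psum n x k < psum n x j) ∧ (∀ k, j < k → k ≤ n → psum n x k < psum n x j)}


lemma psum_zero (n : ℕ) (x : Fin n → ℝ) : psum n x 0 = 0 := by simp [psum]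

lemma psum_all (n : ℕ) (x : Fin n → ℝ) : psum n x n = ∑ i, x i := by
  unfold psum; congr 1; ext i; simp [i.isLt]

lemma psum_append (a b : ℕ) (x : Fin (a + b) → ℝ) (k : ℕ) :
    psum (a + b) x k
      = psum a (fun i => x (Fin.castAdd b i)) (min k a)
        + psum b (fun i => x (Fin.natAdd a i)) (k - a) := by
  unfold psum
  rw [Finset.sum_filter, Finset.sum_filter, Finset.sum_filter, Fin.sum_univ_add]
  congr 1
  · refine Finset.sum_congr rfl fun i _ => ?_
    congr 1
    simp only [Fin.coe_castAdd, eq_iff_iff, lt_min_iff]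
    omega
  · refine Finset.sum_congr rfl fun i _ => ?_
    congr 1
    simp only [Fin.coe_natAdd, eq_iff_iff]
    omega

lemma psum_rev_neg (j : ℕ) (y : Fin j → ℝ) (m : ℕ) (hm : m ≤ j) :
    psum j (fun i => -(y i.rev)) m = psum j y (j - m) - psum j y j := by
  have h1 : psum j (fun i => -(y i.rev)) m
      = -∑ i ∈ univ.filter (fun i : Fin j => ¬ ((i : ℕ) < j - m)), y i := by
    unfold psum
    rw [← Finset.sum_neg_distrib]
    · refine Finset.sum_nbij' (fun i => Fin.rev i) (fun i => Fin.rev i) ?_ ?_ ?_ ?_ ?_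
      · intro i hi
        simp only [mem_filter, mem_univ, true_and, Fin.val_rev] at hi ⊢
        omega
      · intro i hi
        simp only [mem_filter, mem_univ, true_and, Fin.val_rev] at hi ⊢
        omega
      · intro i _; exact Fin.rev_rev i
      · intro i _; exact Fin.rev_rev i
      · intro i _; simp
  rw [h1]
  have h2 : psum j y (j - m) + ∑ i ∈ univ.filter (fun i : Fin j => ¬ ((i : ℕ) < j - m)), y i
      = psum j y j := by
    unfold psum
    rw [Finset.sum_filter_add_sum_filter_not]
    congr 1; ext i; simp [i.isLt]
  linarith

lemma gauss_null_sum (n : ℕ) (s : Finset (Fin n)) (hs : s.Nonempty) :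
    gm n {x | ∑ i ∈ s, x i = 0} = 0 := by
  obtain ⟨i0, hi0⟩ := hs
  match n with
  | 0 => exact i0.elim0
  | m + 1 =>
    set e := MeasurableEquiv.piFinSuccAbove (fun _ : Fin (m+1) => ℝ) i0 with he
    have MP := measurePreserving_piFinSuccAbove (fun _ : Fin (m+1) => gaussianReal (0:ℝ) 1) i0
    set A : Set (Fin (m+1) → ℝ) := {x | ∑ i ∈ s, x i = 0} with hA
    have hmeasA : MeasurableSet A :=
      measurableSet_eq_fun (Finset.measurable_sum _ fun i _ => measurable_pi_apply i)
        measurable_const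
    have h1 : gm (m+1) A
        = ((gaussianReal 0 1).prod (Measure.pi fun _ : Fin m => gaussianReal 0 1))
          (e.symm ⁻¹' A) :=
      (MP.symm e).measure_preimage hmeasA.nullMeasurableSet |>.symm
    rw [h1]
    -- characterize the preimage
    set tset : Finset (Fin m) := univ.filter (fun j => i0.succAbove j ∈ s) with ht
    set G : (Fin m → ℝ) → ℝ := fun w => ∑ j ∈ tset, w j with hG
    have hGm : Measurable G := Finset.measurable_sum _ fun i _ => measurable_pi_apply i
    have key : ∀ (t : ℝ) (w : Fin m → ℝ), ∑ i ∈ s, Fin.insertNth i0 t w i = t + G w := by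
      intro t w
      have h2 : ∑ i ∈ s, Fin.insertNth i0 t w i
          = ∑ i : Fin (m+1), if i ∈ s then Fin.insertNth i0 t w i else 0 := by
        rw [Finset.sum_ite_mem, univ_inter]
      rw [h2, Fin.sum_univ_succAbove (fun i => if i ∈ s then Fin.insertNth i0 t w i else 0) i0]
      simp only [hi0, if_pos, Fin.insertNth_apply_same, Fin.insertNth_apply_succAbove]
      rw [hG]
      congr 1
      exact (Finset.sum_filter _ _).symm
    have hpre : e.symm ⁻¹' A = {p : ℝ × (Fin m → ℝ) | p.1 + G p.2 = 0} := by
      ext ⟨t, w⟩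
      simp only [Set.mem_preimage, hA, Set.mem_setOf_eq, he,
        MeasurableEquiv.piFinSuccAbove_symm_apply, Fin.insertNthEquiv_apply]
      rw [key t w]
    rw [hpre]
    have hswap : {p : ℝ × (Fin m → ℝ) | p.1 + G p.2 = 0}
        = Prod.swap ⁻¹' {q : (Fin m → ℝ) × ℝ | q.2 + G q.1 = 0} := by
      ext ⟨t, w⟩; simp
    have hTmeas : MeasurableSet {q : (Fin m → ℝ) × ℝ | q.2 + G q.1 = 0} :=
      measurableSet_eq_fun (measurable_snd.add (hGm.comp measurable_fst)) measurable_const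
    rw [hswap, ← Measure.map_apply measurable_swap hTmeas, Measure.prod_swap]
    rw [Measure.measure_prod_null hTmeas]
    refine Filter.Eventually.of_forall fun w => ?_
    have : (Prod.mk w ⁻¹' {q : (Fin m → ℝ) × ℝ | q.2 + G q.1 = 0}) = {-(G w)} := by
      ext t; simp [eq_neg_iff_add_eq_zero]
    simp only [Pi.zero_apply, this]
    exact gaussianReal_absolutelyContinuous 0 one_ne_zero (measure_singleton _)

lemma mp_neg (n : ℕ) : MeasurePreserving (fun x : Fin n → ℝ => fun i => -(x i)) (gm n) (gm n) := by
  refine measurePreserving_pi _ _ fun i => ?_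
  refine ⟨measurable_neg, ?_⟩
  have h := gaussianReal_map_const_mul (μ := 0) (v := 1) (-1 : ℝ)
  simp only [neg_one_mul] at h ⊢
  convert h using 2
  · norm_num
  · ext : 1; norm_num

lemma mp_perm (n : ℕ) (σ : Equiv.Perm (Fin n)) :
    MeasurePreserving (fun x : Fin n → ℝ => x ∘ σ) (gm n) (gm n) := by
  have h := measurePreserving_piCongrLeft (fun _ : Fin n => gaussianReal (0:ℝ) 1) σ.symm
  convert h using 1
  ext x : 1
  funext i
  simp [MeasurableEquiv.piCongrLeft, Equiv.piCongrLeft, Equiv.piCongrLeft']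
  all_goals rfl

lemma mp_split (a b : ℕ) :
    MeasurePreserving (fun x : Fin (a + b) → ℝ =>
      ((fun i : Fin a => x (Fin.castAdd b i)), (fun i : Fin b => x (Fin.natAdd a i))))
      (gm (a + b)) ((gm a).prod (gm b)) := by
  have h1 := (measurePreserving_piCongrLeft
    (fun _ : Fin (a + b) => gaussianReal (0:ℝ) 1) finSumFinEquiv).symm
  have h2 := measurePreserving_sumPiEquivProdPi
    (fun _ : Fin a ⊕ Fin b => gaussianReal (0:ℝ) 1)
  have h := h2.comp h1
  convert h using 1
  all_goals rfl

lemma measurableSet_sset (n : ℕ) : MeasurableSet (sset n) := by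
  have : sset n = ⋂ (k : ℕ), ⋂ (_ : 1 ≤ k), ⋂ (_ : k ≤ n), {x | psum n x k < 0} := by
    ext x; simp [sset]
  rw [this]
  exact MeasurableSet.iInter fun k => MeasurableSet.iInter fun _ => MeasurableSet.iInter fun _ =>
    measurableSet_lt (measurable_psum n k) measurable_const

lemma measurableSet_ev (n j : ℕ) : MeasurableSet (ev n j) := by
  have : ev n j = (⋂ (k : ℕ), ⋂ (_ : k < j), {x | psum n x k < psum n x j}) ∩
      ⋂ (k : ℕ), ⋂ (_ : j < k), ⋂ (_ : k ≤ n), {x | psum n x k < psum n x j} := by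
    ext x; simp [ev, forall_and]
  rw [this]
  exact (MeasurableSet.iInter fun k => MeasurableSet.iInter fun _ =>
      measurableSet_lt (measurable_psum n k) (measurable_psum n j)).inter
    (MeasurableSet.iInter fun k => MeasurableSet.iInter fun _ => MeasurableSet.iInter fun _ =>
      measurableSet_lt (measurable_psum n k) (measurable_psum n j))

lemma measurableSet_aset (j : ℕ) : MeasurableSet (aset j) := by
  have : aset j = ⋂ (k : ℕ), ⋂ (_ : k < j), {x | psum j x k < psum j x j} := by
    ext x; simp [aset]
  rw [this]
  exact MeasurableSet.iInter fun k => MeasurableSet.iInter fun _ =>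
    measurableSet_lt (measurable_psum j k) (measurable_psum j j)

lemma aset_eq_preimage (j : ℕ) :
    aset j = (fun y : Fin j → ℝ => fun i => -(y i.rev)) ⁻¹' sset j := by
  ext y
  simp only [aset, sset, Set.mem_preimage, Set.mem_setOf_eq]
  constructor
  · intro h m h1m hmj
    rw [psum_rev_neg j y m hmj]
    have := h (j - m) (by omega)
    linarith
  · intro h k hk
    have := h (j - k) (by omega) (by omega)
    rw [psum_rev_neg j y (j - k) (by omega)] at this
    have hjk : j - (j - k) = k := by omega
    rw [hjk] at this
    linarith

lemma measure_aset (j : ℕ) : gm j (aset j) = gm j (sset j) := by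
  rw [aset_eq_preimage j]
  have hR : MeasurePreserving (fun y : Fin j → ℝ => fun i => -(y i.rev)) (gm j) (gm j) := by
    have h := (mp_neg j).comp (mp_perm j (Fin.revPerm))
    convert h using 1
    rfl
  exact hR.measure_preimage (measurableSet_sset j).nullMeasurableSet

lemma ev_eq_preimage (a b : ℕ) :
    ev (a + b) a = (fun x : Fin (a + b) → ℝ =>
      ((fun i : Fin a => x (Fin.castAdd b i)), (fun i : Fin b => x (Fin.natAdd a i))))
        ⁻¹' (aset a ×ˢ sset b) := by
  ext x
  simp only [ev, Set.mem_preimage, Set.mem_prod, Set.mem_setOf_eq, aset, sset]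
  have hpa : ∀ k, k ≤ a → psum (a + b) x k = psum a (fun i => x (Fin.castAdd b i)) k := by
    intro k hk
    rw [psum_append, min_eq_left hk, Nat.sub_eq_zero_of_le hk, psum_zero, add_zero]
  have hpl : ∀ l, psum (a + b) x (a + l)
      = psum a (fun i => x (Fin.castAdd b i)) a + psum b (fun i => x (Fin.natAdd a i)) l := by
    intro l
    rw [psum_append, min_eq_right (by omega), Nat.add_sub_cancel_left]
  constructor
  · rintro ⟨h1, h2⟩
    refine ⟨fun k hk => ?_, fun l h1l hlb => ?_⟩
    · have := h1 k hk
      rwa [hpa k hk.le, hpa a le_rfl] at this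
    · have := h2 (a + l) (by omega) (by omega)
      rw [hpl l, hpa a le_rfl] at this
      linarith
  · rintro ⟨h1, h2⟩
    refine ⟨fun k hk => ?_, fun k hak hkab => ?_⟩
    · rw [hpa k hk.le, hpa a le_rfl]; exact h1 k hk
    · obtain ⟨l, rfl⟩ : ∃ l, k = a + l := ⟨k - a, by omega⟩
      rw [hpl l, hpa a le_rfl]
      have := h2 l (by omega) (by omega)
      linarith

lemma measure_ev (a b : ℕ) : gm (a + b) (ev (a + b) a) = gm a (sset a) * gm b (sset b) := by
  rw [ev_eq_preimage a b,
    (mp_split a b).measure_preimage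
      (((measurableSet_aset a).prod (measurableSet_sset b)).nullMeasurableSet),
    Measure.prod_prod, measure_aset]

lemma psum_sub (n : ℕ) (x : Fin n → ℝ) (k l : ℕ) (hkl : k ≤ l) :
    psum n x l = psum n x k + ∑ i ∈ univ.filter (fun i : Fin n => (i : ℕ) < l ∧ ¬ (i : ℕ) < k), x i := by
  unfold psum
  rw [← Finset.sum_filter_add_sum_filter_not (univ.filter (fun i : Fin n => (i : ℕ) < l))
    (fun i => (i : ℕ) < k), Finset.filter_filter, Finset.filter_filter]
  congr 2
  · ext i
    constructor
    · intro hi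
      simp only [mem_filter, mem_univ, true_and] at hi ⊢
      exact hi.2
    · intro hi
      simp only [mem_filter, mem_univ, true_and] at hi ⊢
      exact ⟨by omega, hi⟩

lemma null_tie (n k l : ℕ) (hkl : k < l) (hln : l ≤ n) :
    gm n {x | psum n x k = psum n x l} = 0 := by
  have hset : {x : Fin n → ℝ | psum n x k = psum n x l}
      = {x | ∑ i ∈ univ.filter (fun i : Fin n => (i : ℕ) < l ∧ ¬ (i : ℕ) < k), x i = 0} := by
    ext x
    rw [Set.mem_setOf_eq, Set.mem_setOf_eq, psum_sub n x k l hkl.le]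
    constructor <;> intro h <;> linarith
  rw [hset]
  refine gauss_null_sum n _ ⟨⟨k, by omega⟩, ?_⟩
  simp only [mem_filter, mem_univ, true_and]
  omega

lemma sum_ev_eq_one (n : ℕ) : ∑ j ∈ range (n + 1), gm n (ev n j) = 1 := by
  have hdisj : Set.PairwiseDisjoint (↑(range (n + 1))) (ev n) := by
    intro j hj j' hj' hne
    simp only [Finset.coe_range, Set.mem_Iio] at hj hj'
    rw [Function.onFun, Set.disjoint_left]
    rintro x ⟨h1, h2⟩ ⟨h1', h2'⟩
    rcases Nat.lt_or_ge j j' with h | h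
    · have := h2 j' h (by omega)
      have := h1' j h
      linarith
    · have hlt : j' < j := by omega
      have := h2' j hlt (by omega)
      have := h1 j' hlt
      linarith
  rw [← measure_biUnion_finset hdisj fun j _ => measurableSet_ev n j]
  set N : Set (Fin n → ℝ) :=
    ⋃ (k : ℕ) (l : ℕ) (_ : k < l ∧ l ≤ n), {x | psum n x k = psum n x l} with hN
  have hNnull : gm n N = 0 := by
    refine measure_iUnion_null fun k => measure_iUnion_null fun l => measure_iUnion_null fun h => ?_
    exact null_tie n k l h.1 h.2
  have hcover : Set.univ ⊆ (⋃ j ∈ range (n + 1), ev n j) ∪ N := by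
    intro x _
    by_cases hx : x ∈ N
    · exact Or.inr hx
    · left
      have hdist : ∀ k l, k < l → l ≤ n → psum n x k ≠ psum n x l := by
        intro k l h1 h2 heq
        exact hx (Set.mem_iUnion.2 ⟨k, Set.mem_iUnion.2 ⟨l, Set.mem_iUnion.2 ⟨⟨h1, h2⟩, heq⟩⟩⟩)
      obtain ⟨j, hj, hjmax⟩ := Finset.exists_max_image (range (n + 1)) (fun k => psum n x k)
        ⟨0, by simp⟩
      simp only [Finset.mem_range] at hj
      refine Set.mem_biUnion (show j ∈ range (n+1) by simp only [Finset.mem_range]; omega) ?_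
      constructor
      · intro k hk
        have hle := hjmax k (by simp only [Finset.mem_range]; omega)
        have hne := hdist k j hk (by omega)
        cases lt_or_eq_of_le hle with
        | inl h => exact h
        | inr h => exact absurd h hne
      · intro k hjk hkn
        have hle := hjmax k (by simp only [Finset.mem_range]; omega)
        have hne := hdist j k hjk hkn
        cases lt_or_eq_of_le hle with
        | inl h => exact h
        | inr h => exact absurd h.symm hne
  have h1 : (1 : ENNReal) ≤ gm n (⋃ j ∈ range (n + 1), ev n j) := by
    calc (1 : ENNReal) = gm n Set.univ := (measure_univ).symm
    _ ≤ gm n ((⋃ j ∈ range (n + 1), ev n j) ∪ N) := measure_mono hcover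
    _ ≤ gm n (⋃ j ∈ range (n + 1), ev n j) + gm n N := measure_union_le _ _
    _ = gm n (⋃ j ∈ range (n + 1), ev n j) := by rw [hNnull, add_zero]
  exact le_antisymm prob_le_one h1

lemma null_psum_zero (n k : ℕ) (h1 : 1 ≤ k) (h2 : k ≤ n) :
    gm n {x | psum n x k = 0} = 0 := by
  have : {x : Fin n → ℝ | psum n x k = 0}
      = {x | ∑ i ∈ univ.filter (fun i : Fin n => (i : ℕ) < k), x i = 0} := rfl
  rw [this]
  refine gauss_null_sum n _ ⟨⟨k - 1, by omega⟩, ?_⟩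
  simp only [mem_filter, mem_univ, true_and]
  omega

lemma measure_cset_eq_sset (n : ℕ) : gm n (cset n) = gm n (sset n) := by
  set N : Set (Fin n → ℝ) := ⋃ (k : ℕ) (_ : 1 ≤ k ∧ k ≤ n), {x | psum n x k = 0} with hN
  have hNnull : gm n N = 0 :=
    measure_iUnion_null fun k => measure_iUnion_null fun h => null_psum_zero n k h.1 h.2
  have hsub : cset n ⊆ sset n ∪ N := by
    intro x hx
    by_cases hxN : x ∈ N
    · exact Or.inr hxN
    · left
      intro k h1 h2
      rcases lt_or_eq_of_le (hx k h1 h2) with h | h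
      · exact h
      · exact absurd (Set.mem_iUnion.2 ⟨k, Set.mem_iUnion.2 ⟨⟨h1, h2⟩, h⟩⟩) hxN
  refine le_antisymm ?_ (measure_mono fun x hx k h1 h2 => (hx k h1 h2).le)
  calc gm n (cset n) ≤ gm n (sset n ∪ N) := measure_mono hsub
  _ ≤ gm n (sset n) + gm n N := measure_union_le _ _
  _ = gm n (sset n) := by rw [hNnull, add_zero]

-- combinatorial identity

lemma centralBinom_conv (n : ℕ) :
    ∑ i ∈ range (n + 1), Nat.centralBinom i * Nat.centralBinom (n - i) = 4 ^ n := by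
  set c := Nat.centralBinom with hc
  have key : ∀ m : ℕ, 2 * ∑ i ∈ range (m + 1), i * (c i * c (m - i))
      = m * ∑ i ∈ range (m + 1), c i * c (m - i) := by
    intro m
    have h1 : ∑ i ∈ range (m + 1), (m - i) * (c i * c (m - i))
        = ∑ i ∈ range (m + 1), i * (c i * c (m - i)) := by
      have h := Finset.sum_range_reflect (fun i => i * (c i * c (m - i))) (m + 1)
      rw [← h]
      refine Finset.sum_congr rfl fun i hi => ?_
      simp only [Finset.mem_range] at hi
      have h2 : m + 1 - 1 - i = m - i := by omega
      have h3 : m - (m - i) = i := by omega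
      rw [h2, h3, Nat.mul_comm (c i) (c (m - i))]
    calc 2 * ∑ i ∈ range (m + 1), i * (c i * c (m - i))
        = ∑ i ∈ range (m + 1), i * (c i * c (m - i))
          + ∑ i ∈ range (m + 1), (m - i) * (c i * c (m - i)) := by rw [h1]; ring
      _ = ∑ i ∈ range (m + 1), (i + (m - i)) * (c i * c (m - i)) := by
          rw [← Finset.sum_add_distrib]
          exact Finset.sum_congr rfl fun i hi => (add_mul _ _ _).symm
      _ = ∑ i ∈ range (m + 1), m * (c i * c (m - i)) := by
          refine Finset.sum_congr rfl fun i hi => ?_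
          simp only [Finset.mem_range] at hi
          have : i + (m - i) = m := by omega
          rw [this]
      _ = m * ∑ i ∈ range (m + 1), c i * c (m - i) := (Finset.mul_sum _ _ _).symm
  induction n with
  | zero => simp [hc, Nat.centralBinom]
  | succ n ih =>
    set T' : ℕ := ∑ i ∈ range (n + 1), i * (c i * c (n - i)) with hT'
    set T : ℕ := ∑ i ∈ range (n + 2), i * (c i * c (n + 1 - i)) with hT
    have hTval : T = 4 * T' + 2 * 4 ^ n := by
      rw [hT, Finset.sum_range_succ' (fun i => i * (c i * c (n + 1 - i))) (n + 1)]
      simp only [Nat.zero_mul, add_zero]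
      have : ∀ i ∈ range (n + 1), (i + 1) * (c (i + 1) * c (n + 1 - (i + 1)))
          = 4 * (i * (c i * c (n - i))) + 2 * (c i * c (n - i)) := by
        intro i hi
        have h2 : n + 1 - (i + 1) = n - i := by omega
        have h3 : (i + 1) * (c (i + 1) * c (n - i)) = ((i + 1) * c (i + 1)) * c (n - i) := by ring
        rw [h2, h3, hc, Nat.succ_mul_centralBinom_succ i]
        ring
      rw [Finset.sum_congr rfl this, Finset.sum_add_distrib, ← Finset.mul_sum, ← Finset.mul_sum,
        ← hT', ih]
    have h2T : 2 * T = (n + 1) * ∑ i ∈ range (n + 2), c i * c (n + 1 - i) := key (n + 1)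
    have h2T' : 2 * T' = n * 4 ^ n := by
      have h := key n
      rw [ih] at h
      exact h
    have : (n + 1) * ∑ i ∈ range (n + 2), c i * c (n + 1 - i) = (n + 1) * 4 ^ (n + 1) := by
      rw [← h2T, hTval]
      have h4 : 2 * (4 * T' + 2 * 4 ^ n) = 4 * (2 * T') + 4 * 4 ^ n := by ring
      rw [h4]
      rw [h2T']
      ring
    exact Nat.eq_of_mul_eq_mul_left (Nat.succ_pos n) this

noncomputable def q (n : ℕ) : ℝ := (gm n (sset n)).toReal

lemma gm_ne_top (n : ℕ) (s : Set (Fin n → ℝ)) : gm n s ≠ ⊤ :=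
  (measure_lt_top _ _).ne

lemma q_conv (n : ℕ) : ∑ j ∈ range (n + 1), q j * q (n - j) = 1 := by
  have hev : ∀ j ∈ range (n + 1), gm n (ev n j) = gm j (sset j) * gm (n - j) (sset (n - j)) := by
    intro j hj
    simp only [Finset.mem_range] at hj
    obtain ⟨b, rfl⟩ : ∃ b, n = j + b := ⟨n - j, by omega⟩
    have hb : j + b - j = b := by omega
    rw [hb]
    exact measure_ev j b
  have h1 := sum_ev_eq_one n
  rw [Finset.sum_congr rfl hev] at h1
  have h2 : ((∑ j ∈ range (n + 1), gm j (sset j) * gm (n - j) (sset (n - j))).toReal : ℝ)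
      = (1 : ENNReal).toReal := by rw [h1]
  rw [ENNReal.toReal_sum (fun j _ => ENNReal.mul_ne_top (gm_ne_top _ _) (gm_ne_top _ _))] at h2
  simp only [ENNReal.toReal_mul, ENNReal.toReal_one] at h2; exact h2

lemma q_zero : q 0 = 1 := by
  have : sset 0 = Set.univ := by
    ext x; simp only [sset, Set.mem_setOf_eq, Set.mem_univ, iff_true]
    intro k h1 h2; omega
  rw [q, this, measure_univ, ENNReal.toReal_one]

noncomputable def aa (n : ℕ) : ℝ := (Nat.centralBinom n : ℝ) / 4 ^ n

lemma aa_conv (n : ℕ) : ∑ j ∈ range (n + 1), aa j * aa (n - j) = 1 := by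
  have h : ∀ j ∈ range (n + 1), aa j * aa (n - j)
      = ((Nat.centralBinom j * Nat.centralBinom (n - j) : ℕ) : ℝ) / 4 ^ n := by
    intro j hj
    simp only [Finset.mem_range] at hj
    rw [aa, aa, div_mul_div_comm, ← pow_add]
    have : j + (n - j) = n := by omega
    rw [this]
    push_cast
    ring
  rw [Finset.sum_congr rfl h, ← Finset.sum_div, ← Nat.cast_sum, centralBinom_conv]
  push_cast
  rw [div_self]
  positivity

lemma q_eq_aa (n : ℕ) : q n = aa n := by
  induction n using Nat.strong_induction_on with
  | _ n ih =>
    match n with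
    | 0 => rw [q_zero, aa, Nat.centralBinom_zero]; norm_num
    | n + 1 =>
      have hq := q_conv (n + 1)
      have ha := aa_conv (n + 1)
      rw [Finset.sum_range_succ] at hq ha
      rw [Finset.sum_range_succ'] at hq ha
      simp only [Nat.sub_self, Nat.sub_zero] at hq ha
      rw [q_zero] at hq
      have ha0 : aa 0 = 1 := by rw [aa, Nat.centralBinom_zero]; norm_num
      rw [ha0] at ha
      have hmid : ∑ i ∈ range n, q (i + 1) * q (n + 1 - (i + 1))
          = ∑ i ∈ range n, aa (i + 1) * aa (n + 1 - (i + 1)) := by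
        refine Finset.sum_congr rfl fun i hi => ?_
        simp only [Finset.mem_range] at hi
        rw [ih (i + 1) (by omega), ih (n + 1 - (i + 1)) (by omega)]
      rw [hmid] at hq
      linarith

end SparreAndersenAux

open SparreAndersenAux in

/-- Sparre Andersen's formula: if `N = (N_1,…,N_d)` is a standard Gaussian vector in `ℝ^d`,
then the probability that all partial sums `N_1 + ⋯ + N_m`, `m = 1,…,d`, are nonpositive
equals `binom(2d,d)/4^d`. -/
theorem gaussian_walk_stays_nonpositive (d : ℕ) (hd : 1 ≤ d) :
    (Measure.pi fun _ : Fin d => gaussianReal 0 1)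
        {x : Fin d → ℝ | ∀ m : Fin d, ∑ i ∈ Finset.Iic m, x i ≤ 0} =
      (((2 * d).choose d : ENNReal)) / 4 ^ d := by
  have hIic : ∀ (x : Fin d → ℝ) (m : Fin d), ∑ i ∈ Finset.Iic m, x i = psum d x (m.val + 1) := by
    intro x m
    unfold psum
    congr 1
    ext i
    simp only [Finset.mem_Iic, Finset.mem_filter, Finset.mem_univ, true_and, Fin.le_def]
    omega
  have hset : {x : Fin d → ℝ | ∀ m : Fin d, ∑ i ∈ Finset.Iic m, x i ≤ 0} = cset d := by
    ext x
    simp only [Set.mem_setOf_eq, cset]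
    constructor
    · intro h k h1 h2
      have := h ⟨k - 1, by omega⟩
      rw [hIic] at this
      simpa only [show (k - 1) + 1 = k by omega] using this
    · intro h m
      rw [hIic]
      exact h (m.val + 1) (by omega) (by omega)
  have hgm : (Measure.pi fun _ : Fin d => gaussianReal (0:ℝ) 1) = gm d := rfl
  rw [hgm, hset, measure_cset_eq_sset d]
  have h1 : gm d (sset d) = ENNReal.ofReal (q d) := (ENNReal.ofReal_toReal (gm_ne_top _ _)).symm
  rw [h1, q_eq_aa, aa]
  rw [ENNReal.ofReal_div_of_pos (by positivity)]
  rw [ENNReal.ofReal_natCast, Nat.centralBinom_eq_two_mul_choose]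
  congr 1
  rw [ENNReal.ofReal_pow (by norm_num)]
  norm_num
end
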